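/- Let p be a real polynomial of degree n ≥ 1 with positive leading coefficient and let R(z) = (−1)^n p(−z)/p(z). Then p is Hurwitz stable if and only if (i) p(z) and p(−z) have no common complex root (so that R has exactly n poles), and (ii) for every complex z with Re z > 0 one has p(z) ≠ 0 and |R(z)| < 1, i.e., R maps the open right half-plane into the open unit disc. -/

import Mathlib

open Polynomial

/-- A real polynomial is *Hurwitz stable* if all of its complex roots have
negative real part. -/
def HurwitzStable (p : Polynomial ℝ) : Prop :=
  ∀ z : ℂ, Polynomial.aeval z p = 0 → z.re < 0

private lemma multiset_prod_lt_prod (f g : ℂ → ℝ) :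
    ∀ (s : Multiset ℂ), s ≠ 0 → (∀ r ∈ s, 0 ≤ f r ∧ f r < g r) →
      (s.map f).prod < (s.map g).prod := by
  have nonstrict : ∀ (s : Multiset ℂ), (∀ r ∈ s, 0 ≤ f r ∧ f r < g r) →
      (0 ≤ (s.map f).prod ∧ (s.map f).prod ≤ (s.map g).prod) ∧ 0 < (s.map g).prod := by
    intro s
    induction s using Multiset.induction with
    | empty => simp
    | cons a t ih =>
      intro h
      have ha := h a (Multiset.mem_cons_self a t)
      have ht := ih fun r hr => h r (Multiset.mem_cons_of_mem hr)
      simp only [Multiset.map_cons, Multiset.prod_cons]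
      refine ⟨⟨mul_nonneg ha.1 ht.1.1, ?_⟩, mul_pos (lt_of_le_of_lt ha.1 ha.2) ht.2⟩
      nlinarith [ha.1, ha.2, ht.1.1, ht.1.2]
  intro s hs h
  obtain ⟨a, ha⟩ := Multiset.exists_mem_of_ne_zero hs
  obtain ⟨t, rfl⟩ : ∃ t, s = a ::ₘ t := ⟨s.erase a, (Multiset.cons_erase ha).symm⟩
  have haf := h a (Multiset.mem_cons_self a t)
  have ht := nonstrict t fun r hr => h r (Multiset.mem_cons_of_mem hr)
  simp only [Multiset.map_cons, Multiset.prod_cons]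
  calc f a * (t.map f).prod ≤ f a * (t.map g).prod :=
        mul_le_mul_of_nonneg_left ht.1.2 haf.1
    _ < g a * (t.map g).prod := mul_lt_mul_of_pos_right haf.2 ht.2

private lemma abs_lt_abs (z r : ℂ) (hz : 0 < z.re) (hr : r.re < 0) :
    ‖(starRingEnd ℂ) z + r‖ < ‖z - r‖ := by
  have h1 : ‖(starRingEnd ℂ) z + r‖ ^ 2 < ‖z - r‖ ^ 2 := by
    rw [Complex.sq_norm, Complex.sq_norm]
    simp only [Complex.normSq_apply, Complex.add_re, Complex.add_im, Complex.sub_re,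
      Complex.sub_im, Complex.conj_re, Complex.conj_im]
    nlinarith [mul_pos hz (neg_pos.mpr hr)]
  have h0 : 0 ≤ ‖(starRingEnd ℂ) z + r‖ := norm_nonneg _
  have h0' : 0 ≤ ‖z - r‖ := norm_nonneg _
  nlinarith

/-- A real polynomial `p` of degree `n ≥ 1` with positive leading coefficient is
Hurwitz stable iff `p(z)` and `p(-z)` have no common complex root (so that
`R(z) = (-1)^n p(-z)/p(z)` has exactly `n` poles) and `R` maps the open right
half-plane into the open unit disc. -/
theorem hurwitzStable_iff_R_maps_into_unit_disc
    (n : ℕ) (hn : 1 ≤ n) (p : Polynomial ℝ)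
    (hdeg : p.natDegree = n) (hlead : 0 < p.leadingCoeff) :
    HurwitzStable p ↔
      ((∀ z : ℂ, ¬(Polynomial.aeval z p = 0 ∧ Polynomial.aeval (-z) p = 0)) ∧
        ∀ z : ℂ, 0 < z.re →
          Polynomial.aeval z p ≠ 0 ∧
            ‖((-1 : ℂ) ^ n * Polynomial.aeval (-z) p) /
              Polynomial.aeval z p‖ < 1) := by
  have hp0 : p ≠ 0 := fun h => by simp [h] at hlead
  set q := p.map (algebraMap ℝ ℂ) with hq
  have hq0 : q ≠ 0 := by
    simpa [hq, Polynomial.map_eq_zero] using hp0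
  have haev : ∀ z : ℂ, Polynomial.aeval z p = q.eval z := by
    intro z; rw [aeval_def, hq, eval_map]
  constructor
  · intro hstab
    have hroots : ∀ r ∈ q.roots, r.re < 0 := by
      intro r hr
      exact hstab r (by rw [haev]; exact (isRoot_of_mem_roots hr))
    constructor
    · rintro z ⟨h1, h2⟩
      have := hstab z h1
      have := hstab (-z) h2
      simp only [Complex.neg_re] at *
      linarith
    · intro z hz
      have hzne : Polynomial.aeval z p ≠ 0 := by
        intro h
        have := hstab z h
        linarith
      refine ⟨hzne, ?_⟩
      -- key: |p(-z)| < |p(z)|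
      have hsplit : q.Splits := IsAlgClosed.splits _
      have hfact : q = C q.leadingCoeff * (q.roots.map fun a => X - C a).prod :=
        hsplit.eq_prod_roots
      have hcard : q.roots ≠ 0 := by
        intro h0
        have : q.natDegree = n := by
          rw [hq, natDegree_map]; exact hdeg
        have hcard' := (hsplit.natDegree_eq_card_roots)
        rw [h0] at hcard'
        simp [this] at hcard'
        omega
      have heval : ∀ w : ℂ, q.eval w =
          q.leadingCoeff * (q.roots.map fun a => w - a).prod := by
        intro w
        conv_lhs => rw [hfact]
        rw [eval_mul, eval_C, eval_multiset_prod]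
        congr 1
        rw [Multiset.map_map]
        exact congrArg Multiset.prod (Multiset.map_congr rfl fun a ha => by simp)
      -- |p(-z)| = |q.eval (-(conj z))|
      have hconj : ‖Polynomial.aeval (-z) p‖
          = ‖q.eval (-(starRingEnd ℂ) z)‖ := by
        have : (-(starRingEnd ℂ) z) = (starRingEnd ℂ) (-z) := by simp
        rw [this, ← haev, Polynomial.aeval_conj]
        exact (Complex.norm_conj _).symm
      have habs : ‖Polynomial.aeval (-z) p‖
          < ‖Polynomial.aeval z p‖ := by
        rw [hconj, haev, heval, heval, norm_mul, norm_mul]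
        have hlc : 0 < ‖q.leadingCoeff‖ := by
          refine norm_pos_iff.mpr ?_
          simpa [hq, Polynomial.map_eq_zero] using leadingCoeff_ne_zero.mpr hp0
        refine mul_lt_mul_of_pos_left ?_ hlc
        have norm_multiset_prod : ∀ s : Multiset ℂ, ‖s.prod‖ = (s.map (‖·‖)).prod :=
          fun s => map_multiset_prod normHom s
        rw [norm_multiset_prod, norm_multiset_prod, Multiset.map_map, Multiset.map_map]
        refine multiset_prod_lt_prod _ _ q.roots hcard ?_
        intro r hr
        refine ⟨norm_nonneg _, ?_⟩
        simp only [Function.comp_apply]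
        have : (-(starRingEnd ℂ) z) - r = -((starRingEnd ℂ) z + r) := by ring
        rw [this, norm_neg]
        exact abs_lt_abs z r hz (hroots r hr)
      rw [norm_div, norm_mul, norm_pow, norm_neg, norm_one, one_pow, one_mul]
      rw [div_lt_one (norm_pos_iff.mpr hzne)]
      exact habs
  · rintro ⟨h1, h2⟩ z hzroot
    rcases lt_trichotomy z.re 0 with h | h | h
    · exact h
    · exfalso
      have hczz : (starRingEnd ℂ) z = -z := by
        apply Complex.ext <;> simp [h]
      have : Polynomial.aeval (-z) p = 0 := by
        rw [← hczz, Polynomial.aeval_conj, hzroot, map_zero]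
      exact h1 z ⟨hzroot, this⟩
    · exact absurd hzroot (h2 z h).1
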